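/- Let X₁ ∈ ℝ^{p₁}, X₂ ∈ ℝ^{p₂} be integrable random vectors with E(X₂ | X₁) = μ₂ + B X₁ a.s. for a fixed matrix B = Σ₂₁Σ₁₁⁻¹, and Cov(X₂ | X₁) = h(X₁)·S a.s. for a scalar function h ≥ 0 and fixed matrix S = Σ₂₂ - Σ₂₁Σ₁₁⁻¹Σ₁₂. Given an event E = {X₁ ∈ A₁} with positive probability, write Ω₁₁ = Cov(X₁ | E) and ω = E(h(X₁) | E). Then Cov(X₁, X₂ | E) = Ω₁₁ B^T and Cov(X₂ | E) = B Ω₁₁ B^T + ω S. -/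

import Mathlib

open MeasureTheory Matrix

theorem stmt_10_aux {Ω : Type*} (m : MeasurableSpace Ω) [m0 : MeasurableSpace Ω] (hm : m ≤ m0)
    (P : Measure Ω) [IsProbabilityMeasure P] {p₁ p₂ : ℕ}
    (X₁ : Ω → (Fin p₁ → ℝ)) (X₂ : Ω → (Fin p₂ → ℝ))
    (hX₁m : Measurable[m] X₁)
    (hint₁ : Integrable X₁ P) (hint₂ : Integrable X₂ P)
    (hint₁₁ : ∀ r s, Integrable (fun ω => X₁ ω r * X₁ ω s) P)
    (hint₁₂ : ∀ r j, Integrable (fun ω => X₁ ω r * X₂ ω j) P)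
    (hint₂₂ : ∀ i j, Integrable (fun ω => X₂ ω i * X₂ ω j) P)
    (μ₂ : Fin p₂ → ℝ) (B : Matrix (Fin p₂) (Fin p₁) ℝ)
    (Smat : Matrix (Fin p₂) (Fin p₂) ℝ)
    (h : (Fin p₁ → ℝ) → ℝ)
    (hcondmean : P[X₂ | m] =ᵐ[P] fun ω => μ₂ + B *ᵥ X₁ ω)
    (hcondcov : ∀ i j,
      P[(fun ω => (X₂ ω i - (μ₂ + B *ᵥ X₁ ω) i) * (X₂ ω j - (μ₂ + B *ᵥ X₁ ω) j)) | m]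
        =ᵐ[P] fun ω => h (X₁ ω) * Smat i j)
    (Ev : Set Ω) (hEvm : MeasurableSet[m] Ev) (hPEv : P Ev ≠ 0)
    (ξ : Fin p₁ → ℝ) (hξ : ∀ r, ξ r = (P Ev).toReal⁻¹ * ∫ ω in Ev, X₁ ω r ∂P)
    (ζ : Fin p₂ → ℝ) (hζ : ∀ i, ζ i = (P Ev).toReal⁻¹ * ∫ ω in Ev, X₂ ω i ∂P)
    (Om : Matrix (Fin p₁) (Fin p₁) ℝ)
    (hOm : ∀ r s, Om r s = (P Ev).toReal⁻¹ * ∫ ω in Ev, X₁ ω r * X₁ ω s ∂P - ξ r * ξ s)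
    (w : ℝ) (hw : w = (P Ev).toReal⁻¹ * ∫ ω in Ev, h (X₁ ω) ∂P) :
    (∀ r j, (P Ev).toReal⁻¹ * ∫ ω in Ev, X₁ ω r * X₂ ω j ∂P - ξ r * ζ j
        = (Om * Bᵀ) r j) ∧
    (∀ i j, (P Ev).toReal⁻¹ * ∫ ω in Ev, X₂ ω i * X₂ ω j ∂P - ζ i * ζ j
        = (B * Om * Bᵀ + w • Smat) i j) := by
  classical
  haveI : SigmaFinite (P.trim hm) := inferInstance
  have hT : (P Ev).toReal ≠ 0 :=
    ENNReal.toReal_ne_zero.mpr ⟨hPEv, measure_ne_top P Ev⟩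
  have hcT : (P Ev).toReal⁻¹ * (P Ev).toReal = 1 := inv_mul_cancel₀ hT
  have hX₁r : ∀ r, Integrable (fun ω => X₁ ω r) P := by
    intro r
    simpa using (ContinuousLinearMap.proj (R := ℝ) (φ := fun _ : Fin p₁ => ℝ) r).integrable_comp hint₁
  have hX₂j : ∀ j, Integrable (fun ω => X₂ ω j) P := by
    intro j
    simpa using (ContinuousLinearMap.proj (R := ℝ) (φ := fun _ : Fin p₂ => ℝ) j).integrable_comp hint₂
  set mean : Fin p₂ → Ω → ℝ := fun i ω => μ₂ i + ∑ s, B i s * X₁ ω s with hmean_def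
  have hmean_eq : ∀ i ω, (μ₂ + B *ᵥ X₁ ω) i = mean i ω := by
    intro i ω
    simp [hmean_def, Matrix.mulVec, dotProduct]
  have hmean_int : ∀ i, Integrable (mean i) P := fun i =>
    (integrable_const _).add (integrable_finset_sum _ fun s _ => (hX₁r s).const_mul _)
  have hmean_sm : ∀ i, StronglyMeasurable[m] (mean i) := by
    intro i
    have hg : Measurable (fun x : Fin p₁ → ℝ => μ₂ i + ∑ s, B i s * x s) := by fun_prop
    exact (hg.comp hX₁m).stronglyMeasurable
  have hint_meanvec : Integrable (fun ω => μ₂ + B *ᵥ X₁ ω) P := by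
    refine (integrable_const _).add ?_
    simpa using (LinearMap.toContinuousLinearMap B.mulVecLin).integrable_comp hint₁
  have hmeanX₂ : ∀ i j, Integrable (fun ω => mean i ω * X₂ ω j) P := by
    intro i j
    have h1 : Integrable (fun ω => μ₂ i * X₂ ω j + ∑ s, B i s * (X₁ ω s * X₂ ω j)) P :=
      ((hX₂j j).const_mul _).add (integrable_finset_sum _ fun s _ => (hint₁₂ s j).const_mul _)
    refine h1.congr (ae_of_all _ fun ω => ?_)
    simp [hmean_def, add_mul, Finset.sum_mul, mul_assoc]
  have hmeanmean : ∀ i j, Integrable (fun ω => mean i ω * mean j ω) P := by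
    intro i j
    have h1 : Integrable (fun ω => μ₂ i * mean j ω + ∑ s, B i s * (X₁ ω s * mean j ω)) P := by
      refine ((hmean_int j).const_mul _).add (integrable_finset_sum _ fun s _ => ?_)
      have h2 : Integrable (fun ω => μ₂ j * X₁ ω s + ∑ t, B j t * (X₁ ω s * X₁ ω t)) P :=
        ((hX₁r s).const_mul _).add (integrable_finset_sum _ fun t _ => (hint₁₁ s t).const_mul _)
      refine (h2.congr (ae_of_all _ fun ω => ?_)).const_mul _
      simp [hmean_def, mul_add, Finset.mul_sum]
      rw [mul_comm (X₁ ω s) (μ₂ j)]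
      congr 1
      exact Finset.sum_congr rfl fun t _ => by ring
    refine h1.congr (ae_of_all _ fun ω => ?_)
    simp [hmean_def, add_mul, Finset.sum_mul, mul_assoc]
  -- scalar conditional mean
  have hCM : ∀ j, P[(fun ω => X₂ ω j)|m] =ᵐ[P] mean j := by
    intro j
    refine (ae_eq_condExp_of_forall_setIntegral_eq hm (hX₂j j)
      (fun s _ _ => (hmean_int j).integrableOn)
      (fun s hs hμs => ?_)
      ((hmean_sm j).aestronglyMeasurable)).symm
    have h1 : ∫ ω in s, X₂ ω ∂P = ∫ ω in s, (μ₂ + B *ᵥ X₁ ω) ∂P := by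
      rw [← setIntegral_condExp hm hint₂ hs]
      exact integral_congr_ae (ae_restrict_of_ae hcondmean)
    have e1 : ∫ ω in s, X₂ ω j ∂P = (∫ ω in s, X₂ ω ∂P) j := by
      simpa using ((ContinuousLinearMap.proj (R := ℝ) (φ := fun _ : Fin p₂ => ℝ) j).integral_comp_comm
        hint₂.integrableOn)
    have e2 : ∫ ω in s, mean j ω ∂P = (∫ ω in s, (μ₂ + B *ᵥ X₁ ω) ∂P) j := by
      have h3 := (ContinuousLinearMap.proj (R := ℝ) (φ := fun _ : Fin p₂ => ℝ) j).integral_comp_comm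
        (hint_meanvec.integrableOn (s := s))
      simp only [ContinuousLinearMap.proj_apply] at h3
      rw [← h3]
      exact integral_congr_ae (ae_of_all _ fun ω => (hmean_eq j ω).symm)
    rw [e1, e2, h1]
  -- pull-out key lemma
  have key : ∀ (j : Fin p₂) (φ : Ω → ℝ), StronglyMeasurable[m] φ →
      Integrable (fun ω => φ ω * X₂ ω j) P →
      ∫ ω in Ev, φ ω * X₂ ω j ∂P = ∫ ω in Ev, φ ω * mean j ω ∂P := by
    intro j φ hφm hφint
    have hpull : P[(fun ω => φ ω * X₂ ω j)|m]
        =ᵐ[P] φ * P[(fun ω => X₂ ω j)|m] :=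
      condExp_mul_of_stronglyMeasurable_left hφm hφint (hX₂j j)
    rw [← setIntegral_condExp hm hφint hEvm]
    refine integral_congr_ae (ae_restrict_of_ae ?_)
    filter_upwards [hpull, hCM j] with ω h1 h2
    rw [h1, Pi.mul_apply, h2]
  -- raw moment identities
  have F0 : ∀ j, ∫ ω in Ev, X₂ ω j ∂P = ∫ ω in Ev, mean j ω ∂P := by
    intro j
    rw [← setIntegral_condExp hm (hX₂j j) hEvm]
    exact integral_congr_ae (ae_restrict_of_ae (hCM j))
  have F1 : ∀ j, ∫ ω in Ev, mean j ω ∂P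
      = μ₂ j * (P Ev).toReal + ∑ s, B j s * ∫ ω in Ev, X₁ ω s ∂P := by
    intro j
    rw [hmean_def]
    rw [integral_add (integrable_const _).integrableOn
        (integrable_finset_sum _ fun s _ => (hX₁r s).const_mul _).integrableOn,
      integral_finset_sum _ fun s _ => ((hX₁r s).const_mul _).integrableOn]
    rw [setIntegral_const, measureReal_def, smul_eq_mul, mul_comm ((P Ev).toReal) (μ₂ j)]
    congr 1
    exact Finset.sum_congr rfl fun s _ => integral_const_mul _ _
  have F2 : ∀ r j, ∫ ω in Ev, X₁ ω r * X₂ ω j ∂P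
      = μ₂ j * (∫ ω in Ev, X₁ ω r ∂P) + ∑ s, B j s * ∫ ω in Ev, X₁ ω r * X₁ ω s ∂P := by
    intro r j
    have hsm : StronglyMeasurable[m] (fun ω => X₁ ω r) :=
      ((measurable_pi_apply r).comp hX₁m).stronglyMeasurable
    rw [key j _ hsm (hint₁₂ r j)]
    have e : ∀ ω, X₁ ω r * mean j ω
        = μ₂ j * X₁ ω r + ∑ s, B j s * (X₁ ω r * X₁ ω s) := by
      intro ω
      simp [hmean_def, mul_add, Finset.mul_sum]
      rw [mul_comm (X₁ ω r) (μ₂ j)]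
      congr 1
      exact Finset.sum_congr rfl fun s _ => by ring
    rw [integral_congr_ae (ae_of_all _ fun ω => e ω)]
    rw [integral_add ((hX₁r r).const_mul _).integrableOn
        (integrable_finset_sum _ fun s _ => (hint₁₁ r s).const_mul _).integrableOn,
      integral_finset_sum _ fun s _ => ((hint₁₁ r s).const_mul _).integrableOn,
      integral_const_mul _ _]
    congr 1
    exact Finset.sum_congr rfl fun s _ => integral_const_mul _ _
  have F3 : ∀ i j, ∫ ω in Ev, mean i ω * X₂ ω j ∂P = ∫ ω in Ev, mean i ω * mean j ω ∂P :=
    fun i j => key j _ (hmean_sm i) (hmeanX₂ i j)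
  have hcc_int : ∀ i j, Integrable
      (fun ω => (X₂ ω i - (μ₂ + B *ᵥ X₁ ω) i) * (X₂ ω j - (μ₂ + B *ᵥ X₁ ω) j)) P := by
    intro i j
    have h1 : Integrable (fun ω => X₂ ω i * X₂ ω j - mean i ω * X₂ ω j - mean j ω * X₂ ω i
        + mean i ω * mean j ω) P :=
      (((hint₂₂ i j).sub (hmeanX₂ i j)).sub (hmeanX₂ j i)).add (hmeanmean i j)
    refine h1.congr (ae_of_all _ fun ω => ?_)
    dsimp only
    rw [hmean_eq i ω, hmean_eq j ω]
    ring
  have F4 : ∀ i j, ∫ ω in Ev, X₂ ω i * X₂ ω j ∂P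
      = Smat i j * ∫ ω in Ev, h (X₁ ω) ∂P + ∫ ω in Ev, mean i ω * mean j ω ∂P := by
    intro i j
    have h1 : ∫ ω in Ev, (X₂ ω i - (μ₂ + B *ᵥ X₁ ω) i) * (X₂ ω j - (μ₂ + B *ᵥ X₁ ω) j) ∂P
        = Smat i j * ∫ ω in Ev, h (X₁ ω) ∂P := by
      rw [← setIntegral_condExp hm (hcc_int i j) hEvm,
        integral_congr_ae (ae_restrict_of_ae (hcondcov i j)), integral_mul_const]
      ring
    have h2 : ∫ ω in Ev, (X₂ ω i - (μ₂ + B *ᵥ X₁ ω) i) * (X₂ ω j - (μ₂ + B *ᵥ X₁ ω) j) ∂P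
        = ∫ ω in Ev, X₂ ω i * X₂ ω j ∂P - ∫ ω in Ev, mean i ω * X₂ ω j ∂P
          - ∫ ω in Ev, mean j ω * X₂ ω i ∂P + ∫ ω in Ev, mean i ω * mean j ω ∂P := by
      rw [integral_congr_ae (ae_of_all _ fun ω => by
        rw [hmean_eq i ω, hmean_eq j ω]; ring :
        ∀ᵐ ω ∂(P.restrict Ev), (X₂ ω i - (μ₂ + B *ᵥ X₁ ω) i) * (X₂ ω j - (μ₂ + B *ᵥ X₁ ω) j)
          = X₂ ω i * X₂ ω j - mean i ω * X₂ ω j - mean j ω * X₂ ω i + mean i ω * mean j ω)]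
      have HA : IntegrableOn (fun ω => X₂ ω i * X₂ ω j) Ev P := (hint₂₂ i j).integrableOn
      have HB : IntegrableOn (fun ω => mean i ω * X₂ ω j) Ev P := (hmeanX₂ i j).integrableOn
      have HC : IntegrableOn (fun ω => mean j ω * X₂ ω i) Ev P := (hmeanX₂ j i).integrableOn
      have HD : IntegrableOn (fun ω => mean i ω * mean j ω) Ev P := (hmeanmean i j).integrableOn
      have HAB : IntegrableOn (fun ω => X₂ ω i * X₂ ω j - mean i ω * X₂ ω j) Ev P := HA.sub HB
      have HABC : IntegrableOn
          (fun ω => X₂ ω i * X₂ ω j - mean i ω * X₂ ω j - mean j ω * X₂ ω i) Ev P := HAB.sub HC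
      rw [integral_add HABC HD, integral_sub HAB HC, integral_sub HA HB]
    have h3 : ∫ ω in Ev, mean j ω * X₂ ω i ∂P = ∫ ω in Ev, mean i ω * mean j ω ∂P := by
      rw [F3 j i]
      exact integral_congr_ae (ae_of_all _ fun ω => mul_comm _ _)
    rw [h2, F3 i j, h3] at h1
    linarith [h1]
  have F5 : ∀ i j, ∫ ω in Ev, mean i ω * mean j ω ∂P
      = μ₂ i * μ₂ j * (P Ev).toReal
        + μ₂ i * ∑ t, B j t * ∫ ω in Ev, X₁ ω t ∂P
        + μ₂ j * ∑ s, B i s * ∫ ω in Ev, X₁ ω s ∂P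
        + ∑ s, ∑ t, B i s * B j t * ∫ ω in Ev, X₁ ω s * X₁ ω t ∂P := by
    intro i j
    have e : ∀ ω, mean i ω * mean j ω
        = μ₂ i * μ₂ j + μ₂ i * (∑ t, B j t * X₁ ω t) + μ₂ j * (∑ s, B i s * X₁ ω s)
          + ∑ s, ∑ t, B i s * B j t * (X₁ ω s * X₁ ω t) := by
      intro ω
      rw [hmean_def]
      dsimp only
      rw [add_mul, mul_add, mul_add, Finset.sum_mul_sum]
      rw [show (∑ s, ∑ t, (B i s * X₁ ω s) * (B j t * X₁ ω t))
          = ∑ s, ∑ t, B i s * B j t * (X₁ ω s * X₁ ω t) from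
        Finset.sum_congr rfl fun s _ => Finset.sum_congr rfl fun t _ => by ring]
      ring
    rw [integral_congr_ae (ae_of_all _ fun ω => e ω)]
    have I1 : IntegrableOn (fun _ : Ω => μ₂ i * μ₂ j) Ev P := (integrable_const _).integrableOn
    have I2 : IntegrableOn (fun ω => μ₂ i * (∑ t, B j t * X₁ ω t)) Ev P :=
      ((integrable_finset_sum _ fun t _ => (hX₁r t).const_mul _).const_mul _).integrableOn
    have I3 : IntegrableOn (fun ω => μ₂ j * (∑ s, B i s * X₁ ω s)) Ev P :=
      ((integrable_finset_sum _ fun s _ => (hX₁r s).const_mul _).const_mul _).integrableOn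
    have I4 : IntegrableOn (fun ω => ∑ s, ∑ t, B i s * B j t * (X₁ ω s * X₁ ω t)) Ev P :=
      (integrable_finset_sum _ fun s _ =>
        integrable_finset_sum _ fun t _ => (hint₁₁ s t).const_mul _).integrableOn
    have I12 : IntegrableOn
        (fun ω => μ₂ i * μ₂ j + μ₂ i * (∑ t, B j t * X₁ ω t)) Ev P := I1.add I2
    have I123 : IntegrableOn (fun ω => μ₂ i * μ₂ j + μ₂ i * (∑ t, B j t * X₁ ω t)
        + μ₂ j * (∑ s, B i s * X₁ ω s)) Ev P := I12.add I3
    rw [integral_add I123 I4, integral_add I12 I3, integral_add I1 I2]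
    rw [setIntegral_const, measureReal_def, smul_eq_mul, mul_comm ((P Ev).toReal) (μ₂ i * μ₂ j),
      integral_const_mul, integral_const_mul,
      integral_finset_sum _ fun t _ => ((hX₁r t).const_mul _).integrableOn,
      integral_finset_sum _ fun s _ => ((hX₁r s).const_mul _).integrableOn,
      integral_finset_sum _ fun s _ =>
        (integrable_finset_sum _ fun t _ => (hint₁₁ s t).const_mul _).integrableOn]
    have g1 : (∑ t, ∫ ω in Ev, B j t * X₁ ω t ∂P) = ∑ t, B j t * ∫ ω in Ev, X₁ ω t ∂P :=
      Finset.sum_congr rfl fun t _ => integral_const_mul _ _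
    have g2 : (∑ s, ∫ ω in Ev, B i s * X₁ ω s ∂P) = ∑ s, B i s * ∫ ω in Ev, X₁ ω s ∂P :=
      Finset.sum_congr rfl fun s _ => integral_const_mul _ _
    have g3 : (∑ s, ∫ ω in Ev, (∑ t, B i s * B j t * (X₁ ω s * X₁ ω t)) ∂P)
        = ∑ s, ∑ t, B i s * B j t * ∫ ω in Ev, X₁ ω s * X₁ ω t ∂P := by
      refine Finset.sum_congr rfl fun s _ => ?_
      rw [integral_finset_sum _ fun t _ => ((hint₁₁ s t).const_mul _).integrableOn]
      exact Finset.sum_congr rfl fun t _ => integral_const_mul _ _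
    rw [g1, g2, g3]
  have hζ' : ∀ j, ζ j = μ₂ j + ∑ s, B j s * ξ s := by
    intro j
    rw [hζ j, F0 j, F1 j, mul_add, Finset.mul_sum]
    congr 1
    · rw [mul_comm (μ₂ j) ((P Ev).toReal), ← mul_assoc, hcT, one_mul]
    · exact Finset.sum_congr rfl fun s _ => by rw [hξ s]; ring
  constructor
  · intro r j
    rw [F2 r j, hζ' j]
    simp only [Matrix.mul_apply, Matrix.transpose_apply]
    rw [mul_add, Finset.mul_sum, mul_add, Finset.mul_sum]
    have e1 : ∑ s, Om r s * B j s
        = (∑ s, (P Ev).toReal⁻¹ * (B j s * ∫ ω in Ev, X₁ ω r * X₁ ω s ∂P))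
          - ∑ s, ξ r * (B j s * ξ s) := by
      rw [← Finset.sum_sub_distrib]
      exact Finset.sum_congr rfl fun s _ => by rw [hOm r s]; ring
    rw [e1]
    have e2 : (P Ev).toReal⁻¹ * (μ₂ j * ∫ ω in Ev, X₁ ω r ∂P) = ξ r * μ₂ j := by
      rw [hξ r]; ring
    rw [e2]
    ring
  · intro i j
    have hQj : (P Ev).toReal⁻¹ * (∑ t, B j t * ∫ ω in Ev, X₁ ω t ∂P) = ∑ t, B j t * ξ t := by
      rw [Finset.mul_sum]
      exact Finset.sum_congr rfl fun t _ => by rw [hξ t]; ring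
    have hQi : (P Ev).toReal⁻¹ * (∑ s, B i s * ∫ ω in Ev, X₁ ω s ∂P) = ∑ s, B i s * ξ s := by
      rw [Finset.mul_sum]
      exact Finset.sum_congr rfl fun s _ => by rw [hξ s]; ring
    have hdouble : ∑ t, (∑ s, B i s * Om s t) * B j t
        = (P Ev).toReal⁻¹ * (∑ s, ∑ t, B i s * B j t * ∫ ω in Ev, X₁ ω s * X₁ ω t ∂P)
          - (∑ s, B i s * ξ s) * (∑ t, B j t * ξ t) := by
      have hL : ∑ t, (∑ s, B i s * Om s t) * B j t
          = ∑ t, ∑ s, ((P Ev).toReal⁻¹ * (B i s * B j t * ∫ ω in Ev, X₁ ω s * X₁ ω t ∂P)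
              - B i s * ξ s * (B j t * ξ t)) := by
        refine Finset.sum_congr rfl fun t _ => ?_
        rw [Finset.sum_mul]
        refine Finset.sum_congr rfl fun s _ => ?_
        rw [hOm s t]; ring
      rw [hL, Finset.sum_comm]
      simp only [Finset.sum_sub_distrib]
      congr 1
      · rw [Finset.mul_sum]
        exact Finset.sum_congr rfl fun s _ => by rw [Finset.mul_sum]
      · rw [Finset.sum_mul_sum]
    rw [F4 i j, mul_add, F5 i j, mul_add, mul_add, mul_add]
    have hA : (P Ev).toReal⁻¹ * (μ₂ i * μ₂ j * (P Ev).toReal) = μ₂ i * μ₂ j := by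
      rw [mul_comm (μ₂ i * μ₂ j) ((P Ev).toReal), ← mul_assoc, hcT, one_mul]
    have hB : (P Ev).toReal⁻¹ * (μ₂ i * ∑ t, B j t * ∫ ω in Ev, X₁ ω t ∂P)
        = μ₂ i * ∑ t, B j t * ξ t := by
      rw [mul_left_comm, hQj]
    have hC : (P Ev).toReal⁻¹ * (μ₂ j * ∑ s, B i s * ∫ ω in Ev, X₁ ω s ∂P)
        = μ₂ j * ∑ s, B i s * ξ s := by
      rw [mul_left_comm, hQi]
    rw [hA, hB, hC, hζ' i, hζ' j]
    simp only [Matrix.add_apply, Matrix.mul_apply, Matrix.transpose_apply, Matrix.smul_apply,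
      smul_eq_mul]
    rw [hdouble, hw]
    ring

/-- Law of total covariance under truncation: if `E(X₂|X₁) = μ₂ + B X₁` a.s. and
`Cov(X₂|X₁) = h(X₁) • S` a.s., then for an event `Ev = {X₁ ∈ A₁}` of positive
probability, with `Ω₁₁ = Cov(X₁|Ev)` and `w = E(h(X₁)|Ev)`, one has
`Cov(X₁, X₂|Ev) = Ω₁₁ Bᵀ` and `Cov(X₂|Ev) = B Ω₁₁ Bᵀ + w S`. -/
theorem stmt_10 {Ω : Type*} [m0 : MeasurableSpace Ω] (P : Measure Ω)
    [IsProbabilityMeasure P] {p₁ p₂ : ℕ}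
    (X₁ : Ω → (Fin p₁ → ℝ)) (X₂ : Ω → (Fin p₂ → ℝ))
    (hX₁ : Measurable X₁) (hX₂ : Measurable X₂)
    (hint₁ : Integrable X₁ P) (hint₂ : Integrable X₂ P)
    (hint₁₁ : ∀ r s, Integrable (fun ω => X₁ ω r * X₁ ω s) P)
    (hint₁₂ : ∀ r j, Integrable (fun ω => X₁ ω r * X₂ ω j) P)
    (hint₂₂ : ∀ i j, Integrable (fun ω => X₂ ω i * X₂ ω j) P)
    (μ₂ : Fin p₂ → ℝ) (B : Matrix (Fin p₂) (Fin p₁) ℝ)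
    (Smat : Matrix (Fin p₂) (Fin p₂) ℝ)
    (h : (Fin p₁ → ℝ) → ℝ) (hh : ∀ x, 0 ≤ h x) (hhm : Measurable h)
    (hinth : Integrable (fun ω => h (X₁ ω)) P)
    (hcondmean : P[X₂ | MeasurableSpace.comap X₁ inferInstance]
        =ᵐ[P] fun ω => μ₂ + B *ᵥ X₁ ω)
    (hcondcov : ∀ i j,
      P[(fun ω => (X₂ ω i - (μ₂ + B *ᵥ X₁ ω) i) * (X₂ ω j - (μ₂ + B *ᵥ X₁ ω) j)) |
          MeasurableSpace.comap X₁ inferInstance]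
        =ᵐ[P] fun ω => h (X₁ ω) * Smat i j)
    (A₁ : Set (Fin p₁ → ℝ)) (hA₁ : MeasurableSet A₁)
    (Ev : Set Ω) (hEv : Ev = X₁ ⁻¹' A₁) (hPEv : P Ev ≠ 0)
    (ξ : Fin p₁ → ℝ) (hξ : ∀ r, ξ r = (P Ev).toReal⁻¹ * ∫ ω in Ev, X₁ ω r ∂P)
    (ζ : Fin p₂ → ℝ) (hζ : ∀ i, ζ i = (P Ev).toReal⁻¹ * ∫ ω in Ev, X₂ ω i ∂P)
    (Om : Matrix (Fin p₁) (Fin p₁) ℝ)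
    (hOm : ∀ r s, Om r s = (P Ev).toReal⁻¹ * ∫ ω in Ev, X₁ ω r * X₁ ω s ∂P - ξ r * ξ s)
    (w : ℝ) (hw : w = (P Ev).toReal⁻¹ * ∫ ω in Ev, h (X₁ ω) ∂P) :
    (∀ r j, (P Ev).toReal⁻¹ * ∫ ω in Ev, X₁ ω r * X₂ ω j ∂P - ξ r * ζ j
        = (Om * Bᵀ) r j) ∧
    (∀ i j, (P Ev).toReal⁻¹ * ∫ ω in Ev, X₂ ω i * X₂ ω j ∂P - ζ i * ζ j
        = (B * Om * Bᵀ + w • Smat) i j) :=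
  stmt_10_aux (MeasurableSpace.comap X₁ inferInstance) hX₁.comap_le P X₁ X₂
    (Measurable.of_comap_le le_rfl) hint₁ hint₂ hint₁₁ hint₁₂ hint₂₂ μ₂ B Smat h
    hcondmean hcondcov Ev ⟨A₁, hA₁, hEv.symm⟩ hPEv ξ hξ ζ hζ Om hOm w hw
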